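/- Let n ≥ 1, let w_1, …, w_n ≥ 0, let θ_1, …, θ_n, θH be real rates with associated rate function f. Let T > 0, θ^L > 0, C^L ≥ 0 and u^H ≥ 0 be reals, set D = T − C^L/θ^L, suppose D > 0, and let k ∈ {1, …, n+1} be an earliest completion window for D. Assume (i) Σ_{j=1}^{k−1} θ_j·w_j ≥ u^H·W_{k−1}; (ii) θ_j ≤ θ_{j+1} for all 1 ≤ j ≤ k−1 with j+1 ≤ n (and θ_n ≤ θH if k = n+1); (iii) θ_j ≥ u^H for all k ≤ j ≤ n; and (iv) θH ≥ u^H. Then for every t₀ with 0 ≤ t₀ < W_{k−1}, ∫_{t₀}^{t₀+T} f(s) ds ≥ u^H·T. -/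

import Mathlib

/-- Total duration of the first `p` windows: `W_p = w_1 + ⋯ + w_p` (with `W_0 = 0`). -/
noncomputable def Wsum (w : ℕ → ℝ) (p : ℕ) : ℝ := ∑ j ∈ Finset.Icc 1 p, w j

/-- The multi-rate fluid rate function: `f s = θ j` for `W_{j-1} ≤ s < W_j`
(`1 ≤ j ≤ n`) and `f s = θH` for `s ≥ W_n`. -/
noncomputable def rateFn (n : ℕ) (w θ : ℕ → ℝ) (θH : ℝ) (s : ℝ) : ℝ :=
  if s < Wsum w n then θ (sInf {j : ℕ | 1 ≤ j ∧ s < Wsum w j}) else θH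

/-- `k ∈ {1, …, n+1}` is an earliest completion window for `D` if `W_{k-1} < D`
and, in case `k ≤ n`, also `W_k ≥ D`. -/
def ECW (n : ℕ) (w : ℕ → ℝ) (D : ℝ) (k : ℕ) : Prop :=
  1 ≤ k ∧ k ≤ n + 1 ∧ Wsum w (k - 1) < D ∧ (k ≤ n → D ≤ Wsum w k)

lemma Wsum_zero (w : ℕ → ℝ) : Wsum w 0 = 0 := by simp [Wsum]

lemma Wsum_succ (w : ℕ → ℝ) (p : ℕ) : Wsum w (p + 1) = Wsum w p + w (p + 1) := by
  simpa [Wsum] using Finset.sum_Icc_succ_top (by omega : 1 ≤ p + 1) w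

lemma Wsum_mono (n : ℕ) (w : ℕ → ℝ) (hw : ∀ j, 1 ≤ j → j ≤ n → 0 ≤ w j)
    {i j : ℕ} (hij : i ≤ j) (hjn : j ≤ n) : Wsum w i ≤ Wsum w j := by
  apply Finset.sum_le_sum_of_subset_of_nonneg
  · exact Finset.Icc_subset_Icc_right hij
  · intro x hx _
    simp only [Finset.mem_Icc] at hx
    exact hw x hx.1 (hx.2.trans hjn)

lemma rate_window (n : ℕ) (w θ : ℕ → ℝ) (θH : ℝ)
    (hw : ∀ j, 1 ≤ j → j ≤ n → 0 ≤ w j)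
    {j : ℕ} (h1 : 1 ≤ j) (h2 : j ≤ n) {s : ℝ}
    (hs1 : Wsum w (j - 1) ≤ s) (hs2 : s < Wsum w j) :
    rateFn n w θ θH s = θ j := by
  have hsn : s < Wsum w n := lt_of_lt_of_le hs2 (Wsum_mono n w hw h2 le_rfl)
  unfold rateFn
  rw [if_pos hsn]
  congr 1
  have hjmem : j ∈ {i : ℕ | 1 ≤ i ∧ s < Wsum w i} := ⟨h1, hs2⟩
  refine le_antisymm (Nat.sInf_le hjmem) ?_
  by_contra h
  push_neg at h
  obtain ⟨hi1, hi2⟩ := Nat.sInf_mem (⟨j, hjmem⟩ :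
    Set.Nonempty {i : ℕ | 1 ≤ i ∧ s < Wsum w i})
  exact absurd hi2 (not_lt.2 ((Wsum_mono n w hw (by omega) (by omega)).trans hs1))

lemma rate_high (n : ℕ) (w θ : ℕ → ℝ) (θH : ℝ) {s : ℝ}
    (hs : Wsum w n ≤ s) : rateFn n w θ θH s = θH := by
  unfold rateFn
  rw [if_neg (not_lt.2 hs)]

lemma exists_window (n : ℕ) (hn : 1 ≤ n) (w θ : ℕ → ℝ) (θH : ℝ)
    (hw : ∀ j, 1 ≤ j → j ≤ n → 0 ≤ w j) {s : ℝ}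
    (hs0 : 0 ≤ s) (hsn : s < Wsum w n) :
    ∃ j, 1 ≤ j ∧ j ≤ n ∧ Wsum w (j - 1) ≤ s ∧ s < Wsum w j ∧
      rateFn n w θ θH s = θ j := by
  set S : Set ℕ := {i : ℕ | 1 ≤ i ∧ s < Wsum w i} with hS
  have hnmem : n ∈ S := ⟨hn, hsn⟩
  have hne : S.Nonempty := ⟨n, hnmem⟩
  obtain ⟨hj1, hj2⟩ := Nat.sInf_mem hne
  set j := sInf S with hj
  have hjn : j ≤ n := Nat.sInf_le hnmem
  have hlow : Wsum w (j - 1) ≤ s := by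
    by_contra h
    push_neg at h
    rcases Nat.eq_or_lt_of_le hj1 with h1 | h1
    · rw [← h1] at h
      simp [Wsum_zero] at h
      exact absurd hs0 (not_le.2 h)
    · have : j ≤ j - 1 := Nat.sInf_le ⟨by omega, h⟩
      omega
  exact ⟨j, hj1, hjn, hlow, hj2, rate_window n w θ θH hw hj1 hjn hlow hj2⟩

lemma integ_const_piece (f : ℝ → ℝ) {a b : ℝ} (c : ℝ) (hab : a ≤ b)
    (h : ∀ s ∈ Set.Ico a b, f s = c) :
    IntervalIntegrable f MeasureTheory.volume a b ∧
      ∫ s in a..b, f s = c * (b - a) := by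
  have hae : f =ᵐ[MeasureTheory.volume.restrict (Set.Ioc a b)] fun _ => c := by
    rw [← MeasureTheory.Measure.restrict_congr_set MeasureTheory.Ioo_ae_eq_Ioc]
    filter_upwards [MeasureTheory.ae_restrict_mem measurableSet_Ioo] with s hs
    exact h s ⟨le_of_lt hs.1, hs.2⟩
  have hconst : MeasureTheory.IntegrableOn (fun _ : ℝ => c) (Set.Ioc a b) := by
    apply (MeasureTheory.integrableOn_const_iff).2
    exact Or.inr measure_Ioc_lt_top
  have hint : MeasureTheory.IntegrableOn f (Set.Ioc a b) := hconst.congr hae.symm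
  have hii : IntervalIntegrable f MeasureTheory.volume a b :=
    (intervalIntegrable_iff_integrableOn_Ioc_of_le hab).2 hint
  refine ⟨hii, ?_⟩
  rw [intervalIntegral.integral_of_le hab, MeasureTheory.integral_congr_ae hae,
    MeasureTheory.setIntegral_const, Real.volume_real_Ioc_of_le hab, smul_eq_mul]
  ring

lemma ii_prefix (n : ℕ) (w θ : ℕ → ℝ) (θH : ℝ)
    (hw : ∀ j, 1 ≤ j → j ≤ n → 0 ≤ w j) :
    ∀ p, p ≤ n →
      IntervalIntegrable (rateFn n w θ θH) MeasureTheory.volume 0 (Wsum w p) ∧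
      ∫ s in (0:ℝ)..(Wsum w p), rateFn n w θ θH s
        = ∑ j ∈ Finset.Icc 1 p, θ j * w j := by
  intro p
  induction p with
  | zero =>
    intro _
    constructor
    · simp [Wsum_zero]
    · simp [Wsum_zero]
  | succ p ih =>
    intro hpn
    obtain ⟨ih1, ih2⟩ := ih (by omega)
    have hle : Wsum w p ≤ Wsum w (p + 1) := Wsum_mono n w hw (Nat.le_succ p) hpn
    have hval : ∀ s ∈ Set.Ico (Wsum w p) (Wsum w (p + 1)),
        rateFn n w θ θH s = θ (p + 1) := by
      intro s hs
      exact rate_window n w θ θH hw (by omega) hpn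
        (by simpa using hs.1) hs.2
    obtain ⟨hp1, hp2⟩ := integ_const_piece (rateFn n w θ θH) (θ (p + 1)) hle hval
    constructor
    · exact ih1.trans hp1
    · rw [← intervalIntegral.integral_add_adjacent_intervals ih1 hp1, ih2, hp2,
        Finset.sum_Icc_succ_top (by omega : 1 ≤ p + 1), Wsum_succ]
      ring

/-- **Theorem 2** (early transition jobs): under conditions (12)–(15), a job released
at `t₀ < W_{k−1}` after the mode switch receives at least `u^H·T` units of allocation
in `[t₀, t₀ + T]`. -/
theorem stmt3 (n : ℕ) (hn : 1 ≤ n) (w θ : ℕ → ℝ)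
    (hw : ∀ j, 1 ≤ j → j ≤ n → 0 ≤ w j) (θH : ℝ)
    (T θL CL uH : ℝ) (hT : 0 < T) (hθL : 0 < θL) (hCL : 0 ≤ CL) (huH : 0 ≤ uH)
    (D : ℝ) (hDdef : D = T - CL / θL) (hD : 0 < D)
    (k : ℕ) (hk : ECW n w D k)
    (h12 : uH * Wsum w (k - 1) ≤ ∑ j ∈ Finset.Icc 1 (k - 1), θ j * w j)
    (h13 : ∀ j, 1 ≤ j → j ≤ k - 1 → j + 1 ≤ n → θ j ≤ θ (j + 1))
    (h13' : k = n + 1 → θ n ≤ θH)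
    (h14 : ∀ j, k ≤ j → j ≤ n → uH ≤ θ j)
    (h15 : uH ≤ θH) :
    ∀ t₀, 0 ≤ t₀ → t₀ < Wsum w (k - 1) →
      uH * T ≤ ∫ s in t₀..(t₀ + T), rateFn n w θ θH s := by
  obtain ⟨hk1, hk2, hkD, _⟩ := hk
  intro t₀ ht0 ht0b
  set f := rateFn n w θ θH with hf
  set m := k - 1 with hm
  have hmn : m ≤ n := by omega
  -- monotone chain
  have hchain : ∀ i j, 1 ≤ i → i ≤ j → j ≤ m → θ i ≤ θ j := by
    intro i j hi hij hjm
    induction j with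
    | zero => omega
    | succ j ihj =>
      rcases Nat.eq_or_lt_of_le hij with h | h
      · rw [h]
      · have hj' : θ i ≤ θ j := ihj (by omega) (by omega)
        exact hj'.trans (h13 j (by omega) (by omega) (by omega))
  -- basic positions
  have hW0 : (0:ℝ) = Wsum w 0 := (Wsum_zero w).symm
  have hb0 : 0 ≤ Wsum w m := by
    rw [hW0]; exact Wsum_mono n w hw (Nat.zero_le m) hmn
  have hbn : Wsum w m ≤ Wsum w n := Wsum_mono n w hw hmn le_rfl
  have hDT : D ≤ T := by
    rw [hDdef]
    have : 0 ≤ CL / θL := div_nonneg hCL (le_of_lt hθL)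
    linarith
  have hbT : Wsum w m < T := lt_of_lt_of_le hkD hDT
  have hbE : Wsum w m ≤ t₀ + T := by linarith
  have htE : t₀ ≤ t₀ + T := by linarith
  have ht0bE : t₀ ≤ Wsum w m := le_of_lt ht0b
  -- f ≥ uH beyond W m
  have hge : ∀ s, Wsum w m ≤ s → uH ≤ f s := by
    intro s hs
    rcases lt_or_ge s (Wsum w n) with hsn | hsn
    · obtain ⟨j, hj1, hj2, hj3, hj4, hj5⟩ :=
        exists_window n hn w θ θH hw (hb0.trans hs) hsn
      have hjk : k ≤ j := by
        by_contra hcon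
        push_neg at hcon
        have : Wsum w j ≤ Wsum w m := Wsum_mono n w hw (by omega) hmn
        linarith
      rw [hf, hj5]
      exact h14 j hjk hj2
    · rw [hf, rate_high n w θ θH hsn]
      exact h15
  -- integrability facts
  have hgii : ∀ a b : ℝ, 0 ≤ a → a ≤ b → IntervalIntegrable f MeasureTheory.volume a b := by
    intro a b ha hab
    have hWn0 : 0 ≤ Wsum w n := by
      rw [hW0]; exact Wsum_mono n w hw (Nat.zero_le n) le_rfl
    set x := max b (Wsum w n) with hx
    have hWnx : Wsum w n ≤ x := le_max_right _ _
    have h1 : IntervalIntegrable f MeasureTheory.volume 0 (Wsum w n) :=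
      (ii_prefix n w θ θH hw n le_rfl).1
    have h2 : IntervalIntegrable f MeasureTheory.volume (Wsum w n) x :=
      (integ_const_piece f θH hWnx
        (fun s hs => rate_high n w θ θH hs.1)).1
    have h0x : IntervalIntegrable f MeasureTheory.volume 0 x := h1.trans h2
    apply h0x.mono_set
    rw [Set.uIcc_of_le hab, Set.uIcc_of_le (hWn0.trans hWnx)]
    exact Set.Icc_subset_Icc ha (le_max_left _ _)
  -- locate t₀'s window
  obtain ⟨i, hi1, hi2, hi3, hi4, hi5⟩ :=
    exists_window n hn w θ θH hw ht0 (lt_of_lt_of_le ht0b hbn)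
  have him : i ≤ m := by
    by_contra hcon
    push_neg at hcon
    have : Wsum w m ≤ Wsum w (i - 1) := Wsum_mono n w hw (by omega) (by omega)
    linarith
  -- bound over the tail [W m, t₀ + T]
  have hI2 : IntervalIntegrable f MeasureTheory.volume (Wsum w m) (t₀ + T) :=
    hgii _ _ hb0 hbE
  have hB : uH * (t₀ + T - Wsum w m) ≤ ∫ s in (Wsum w m)..(t₀ + T), f s := by
    have := intervalIntegral.integral_mono_on hbE
      (intervalIntegrable_const (c := uH)) hI2 (fun s hs => hge s hs.1)
    rwa [intervalIntegral.integral_const, smul_eq_mul, mul_comm] at this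
  rcases le_or_gt uH (θ i) with hcase | hcase
  · -- θ i ≥ uH : f ≥ uH on all of [t₀, t₀+T]
    have hptw : ∀ s ∈ Set.Icc t₀ (t₀ + T), uH ≤ f s := by
      intro s hs
      rcases le_or_gt (Wsum w m) s with hsb | hsb
      · exact hge s hsb
      · obtain ⟨j, hj1, hj2, hj3, hj4, hj5⟩ :=
          exists_window n hn w θ θH hw (ht0.trans hs.1) (lt_of_lt_of_le hsb hbn)
        have hij : i ≤ j := by
          by_contra hcon
          push_neg at hcon
          have : Wsum w j ≤ Wsum w (i - 1) := Wsum_mono n w hw (by omega) (by omega)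
          have := hs.1
          linarith
        have hjm : j ≤ m := by
          by_contra hcon
          push_neg at hcon
          have : Wsum w m ≤ Wsum w (j - 1) := Wsum_mono n w hw (by omega) (by omega)
          linarith
        rw [hf, hj5]
        exact hcase.trans (hchain i j hi1 hij hjm)
    have := intervalIntegral.integral_mono_on htE
      (intervalIntegrable_const (c := uH)) (hgii _ _ ht0 htE) hptw
    rw [intervalIntegral.integral_const, smul_eq_mul, mul_comm] at this
    calc uH * T = uH * (t₀ + T - t₀) := by ring
    _ ≤ _ := this
  · -- θ i < uH : use averages
    have hI0t : IntervalIntegrable f MeasureTheory.volume 0 t₀ := hgii _ _ le_rfl ht0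
    have hI0b : IntervalIntegrable f MeasureTheory.volume 0 (Wsum w m) :=
      (ii_prefix n w θ θH hw m hmn).1
    have hItE : IntervalIntegrable f MeasureTheory.volume t₀ (t₀ + T) :=
      hgii _ _ ht0 htE
    have hIbE := hI2
    -- head integral bound: ∫_0^{t₀} f ≤ θ i * t₀
    have hH : ∫ s in (0:ℝ)..t₀, f s ≤ θ i * t₀ := by
      have hptw : ∀ s ∈ Set.Icc (0:ℝ) t₀, f s ≤ θ i := by
        intro s hs
        have hsWi : s < Wsum w i := lt_of_le_of_lt hs.2 hi4
        obtain ⟨j, hj1, hj2, hj3, hj4, hj5⟩ :=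
          exists_window n hn w θ θH hw hs.1
            (lt_of_lt_of_le hsWi (Wsum_mono n w hw hi2 le_rfl))
        have hji : j ≤ i := by
          by_contra hcon
          push_neg at hcon
          have : Wsum w i ≤ Wsum w (j - 1) := Wsum_mono n w hw (by omega) (by omega)
          linarith
        rw [hf, hj5]
        exact hchain j i hj1 hji him
      have := intervalIntegral.integral_mono_on ht0
        hI0t (intervalIntegrable_const (c := θ i)) hptw
      rwa [intervalIntegral.integral_const, smul_eq_mul, mul_comm,
        sub_zero] at this
    -- total integral bound: ∫_0^{W m} f ≥ uH * W m
    have hTot : uH * Wsum w m ≤ ∫ s in (0:ℝ)..(Wsum w m), f s := by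
      rw [(ii_prefix n w θ θH hw m hmn).2]
      exact h12
    -- combine
    have hsplit1 : (∫ s in (0:ℝ)..t₀, f s) + ∫ s in t₀..(t₀ + T), f s
        = ∫ s in (0:ℝ)..(t₀ + T), f s :=
      intervalIntegral.integral_add_adjacent_intervals hI0t hItE
    have hsplit2 : (∫ s in (0:ℝ)..(Wsum w m), f s) + ∫ s in (Wsum w m)..(t₀ + T), f s
        = ∫ s in (0:ℝ)..(t₀ + T), f s :=
      intervalIntegral.integral_add_adjacent_intervals hI0b hIbE
    have hti : θ i * t₀ ≤ uH * t₀ := mul_le_mul_of_nonneg_right (le_of_lt hcase) ht0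
    nlinarith [hB, hH, hTot, hsplit1, hsplit2]
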